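/- Let d ≥ 1 and let ε = (ε₁,…,ε_d) ∈ {−1,+1}^d, with the convention ε₀ = 1. Then there exists a family of polynomials H_{k,ε}(e₁,e₂) ∈ ℤ[e₁,e₂], k = 1,…,d, each homogeneous of degree k with nonnegative integer coefficients, such that for every commutative ring K, every polynomial P ∈ K[X] of degree at most d, and all a, b, x ∈ K, writing e₁ = x − a and e₂ = b − x, one has the algebraic identity P(x) = P(a₀) + Σ_{k=1}^{d−1} ε_k · H_{k,ε}(e₁,e₂) · P^[k](a_k) + ε_d · H_{d,ε}(e₁,e₂) · p_d, where p_d is the coefficient of X^d in P, and where a_k = a if ε_k ε_{k+1} = 1 and a_k = b if ε_k ε_{k+1} = −1 (for 0 ≤ k ≤ d−1). Moreover, if ε₁ = 1 then e₁ divides every H_{k,ε} and the coefficient of e₁^k in H_{k,ε} is nonzero; if ε₁ = −1 then e₂ divides every H_{k,ε} and the coefficient of e₂^k in H_{k,ε} is nonzero. -/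

import Mathlib

universe u

namespace GTaylor

open MvPolynomial Finset

noncomputable def cpt (ε : ℕ → ℤ) (j : ℕ) : MvPolynomial (Fin 2) ℤ :=
  if ε j * ε (j+1) = 1 then - X 0 else X 1

noncomputable def B (ε : ℕ → ℤ) : ℕ → MvPolynomial (Fin 2) ℤ
  | 0 => 1
  | n+1 => - ∑ j ∈ (Finset.range (n+1)).attach,
      (((n+1).choose j.1 : ℕ) : MvPolynomial (Fin 2) ℤ) * (cpt ε j.1 ^ (n+1 - j.1) * B ε j.1)
  termination_by n => n
  decreasing_by exact Finset.mem_range.mp j.2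

lemma B_zero (ε : ℕ → ℤ) : B ε 0 = 1 := by simp [B]

lemma B_succ (ε : ℕ → ℤ) (n : ℕ) : B ε (n+1)
    = - ∑ j ∈ Finset.range (n+1),
        (((n+1).choose j : ℕ) : MvPolynomial (Fin 2) ℤ) * (cpt ε j ^ (n+1 - j) * B ε j) := by
  rw [B, Finset.sum_attach (Finset.range (n+1))
    (fun j => (((n+1).choose j : ℕ) : MvPolynomial (Fin 2) ℤ) * (cpt ε j ^ (n+1 - j) * B ε j))]

lemma Brec (ε : ℕ → ℤ) (n : ℕ) :
    ∑ j ∈ Finset.range (n+1),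
      ((n.choose j : ℕ) : MvPolynomial (Fin 2) ℤ) * (cpt ε j ^ (n - j) * B ε j)
      = if n = 0 then 1 else 0 := by
  cases n with
  | zero => simp [B_zero]
  | succ n =>
    rw [Finset.sum_range_succ]
    simp [B_succ]

lemma cpt_hom (ε : ℕ → ℤ) (j : ℕ) : (cpt ε j).IsHomogeneous 1 := by
  unfold cpt; split
  · exact (isHomogeneous_X _ 0).neg
  · exact isHomogeneous_X _ 1

lemma natCast_eq_C (c : ℕ) : ((c : ℕ) : MvPolynomial (Fin 2) ℤ) = C ((c : ℕ) : ℤ) := by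
  simp

lemma B_hom (ε : ℕ → ℤ) : ∀ n, (B ε n).IsHomogeneous n := by
  intro n
  induction n using Nat.strong_induction_on with
  | _ n ih =>
    cases n with
    | zero => rw [B_zero]; exact isHomogeneous_one _ _
    | succ n =>
      rw [B_succ]
      apply MvPolynomial.IsHomogeneous.neg
      apply MvPolynomial.IsHomogeneous.sum
      intro j hj
      have hj' : j < n+1 := Finset.mem_range.mp hj
      have h1 := ((cpt_hom ε j).pow (n+1-j)).mul (ih j hj')
      rw [one_mul, Nat.sub_add_cancel hj'.le] at h1
      rw [natCast_eq_C]
      exact h1.C_mul _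

lemma X_dvd_B (ε : ℕ → ℤ) (i : Fin 2) (h0 : X i ∣ cpt ε 0) (n : ℕ) :
    X i ∣ B ε (n+1) := by
  induction n using Nat.strong_induction_on with
  | _ n ih =>
    rw [B_succ]
    rw [dvd_neg]
    apply Finset.dvd_sum
    intro j hj
    have hj' : j < n+1 := Finset.mem_range.mp hj
    apply Dvd.dvd.mul_left
    rcases Nat.eq_zero_or_pos j with rfl | hjpos
    · exact (dvd_pow h0 (by omega)).mul_right _
    · obtain ⟨m, rfl⟩ := Nat.exists_eq_succ_of_ne_zero (Nat.pos_iff_ne_zero.mp hjpos)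
      exact (ih m (by omega)).mul_left _

lemma coeff_eq_zero_of_X_dvd {p : MvPolynomial (Fin 2) ℤ} {i : Fin 2} (h : X i ∣ p)
    {m : Fin 2 →₀ ℕ} (hm : m i = 0) : coeff m p = 0 := by
  obtain ⟨q, rfl⟩ := h
  rw [coeff_X_mul']
  simp [Finsupp.mem_support_iff, hm]


lemma coeff_pderiv {σ : Type*} [DecidableEq σ] (i : σ) (f : MvPolynomial σ ℤ) (m : σ →₀ ℕ) :
    coeff m (pderiv i f) = ((m i + 1 : ℕ) : ℤ) * coeff (m + Finsupp.single i 1) f := by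
  induction f using MvPolynomial.induction_on' with
  | add p q hp hq => simp [hp, hq, mul_add]
  | monomial s a =>
    rw [pderiv_monomial, coeff_monomial, coeff_monomial]
    by_cases hs : s = m + Finsupp.single i 1
    · subst hs
      rw [if_pos rfl, if_pos (by rw [add_tsub_cancel_right])]
      have h2 : ((m + Finsupp.single i 1 : σ →₀ ℕ)) i = m i + 1 := by
        rw [Finsupp.add_apply, Finsupp.single_eq_same]
      rw [h2]
      ring
    · rw [if_neg hs]
      rcases Nat.eq_zero_or_pos (s i) with h0 | hpos
      · rw [h0]
        simp
      · rw [if_neg, mul_zero]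
        intro hcon
        apply hs
        have hle : Finsupp.single i 1 ≤ s := by
          rw [Finsupp.single_le_iff]
          exact hpos
        rw [← hcon, tsub_add_cancel_of_le hle]

def shift (ε : ℕ → ℤ) : ℕ → ℤ := fun j => ε 1 * ε (j+1)

lemma cpt_shift (ε : ℕ → ℤ) (hε : ε 1 * ε 1 = 1) (j : ℕ) :
    cpt (shift ε) j = cpt ε (j+1) := by
  have h : shift ε j * shift ε (j+1) = ε (j+1) * ε (j+1+1) := by
    unfold shift
    calc ε 1 * ε (j+1) * (ε 1 * ε (j+1+1)) = (ε 1 * ε 1) * (ε (j+1) * ε (j+1+1)) := by ring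
    _ = ε (j+1) * ε (j+1+1) := by rw [hε, one_mul]
  unfold cpt
  rw [h]

noncomputable def D (p : MvPolynomial (Fin 2) ℤ) : MvPolynomial (Fin 2) ℤ :=
  pderiv 0 p - pderiv 1 p

lemma D_cpt (ε : ℕ → ℤ) (j : ℕ) : D (cpt ε j) = -1 := by
  unfold D cpt
  split
  · rw [map_neg, map_neg, pderiv_X_self, pderiv_X_of_ne (by decide)]
    simp
  · rw [pderiv_X_of_ne (by decide), pderiv_X_self]
    simp

lemma D_mul (f g : MvPolynomial (Fin 2) ℤ) : D (f * g) = D f * g + f * D g := by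
  unfold D
  rw [pderiv_mul, pderiv_mul]
  ring

lemma D_pow (f : MvPolynomial (Fin 2) ℤ) (e : ℕ) :
    D (f ^ e) = (e : MvPolynomial (Fin 2) ℤ) * f ^ (e-1) * D f := by
  unfold D
  rw [pderiv_pow, pderiv_pow]
  ring

lemma D_one : D (1 : MvPolynomial (Fin 2) ℤ) = 0 := by
  unfold D; simp

lemma D_natCast (c : ℕ) : D ((c : ℕ) : MvPolynomial (Fin 2) ℤ) = 0 := by
  unfold D; simp

lemma D_sum {ι : Type*} (s : Finset ι) (f : ι → MvPolynomial (Fin 2) ℤ) :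
    D (∑ j ∈ s, f j) = ∑ j ∈ s, D (f j) := by
  unfold D
  rw [map_sum, map_sum, ← Finset.sum_sub_distrib]

lemma D_neg (f : MvPolynomial (Fin 2) ℤ) : D (-f) = - D f := by
  unfold D; rw [map_neg, map_neg]; ring

lemma B_deriv (ε : ℕ → ℤ) (hε : ε 1 * ε 1 = 1) (n : ℕ) :
    D (B ε (n+1)) = ((n+1 : ℕ) : MvPolynomial (Fin 2) ℤ) * B (shift ε) n := by
  induction n using Nat.strong_induction_on with
  | _ n ih =>
    have hterm : ∀ j ∈ Finset.range (n+1),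
        D ((((n+1).choose j : ℕ) : MvPolynomial (Fin 2) ℤ) * (cpt ε j ^ (n+1-j) * B ε j))
        = -((((n+1).choose j * (n+1-j) : ℕ) : MvPolynomial (Fin 2) ℤ) *
              (cpt ε j ^ (n-j) * B ε j))
          + (((n+1).choose j : ℕ) : MvPolynomial (Fin 2) ℤ) *
              (cpt ε j ^ (n+1-j) * D (B ε j)) := by
      intro j hj
      have hj' : j < n+1 := Finset.mem_range.mp hj
      rw [D_mul, D_natCast, zero_mul, zero_add, D_mul, D_pow, D_cpt]
      have he : n+1-j-1 = n-j := by omega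
      rw [he]
      push_cast
      ring
    have e1 : ∑ j ∈ Finset.range (n+1),
        (((n+1).choose j * (n+1-j) : ℕ) : MvPolynomial (Fin 2) ℤ) * (cpt ε j ^ (n-j) * B ε j)
        = ((n+1 : ℕ) : MvPolynomial (Fin 2) ℤ) *
            (if n = 0 then 1 else 0) := by
      have hc : ∀ j ∈ Finset.range (n+1),
          (((n+1).choose j * (n+1-j) : ℕ) : MvPolynomial (Fin 2) ℤ) * (cpt ε j ^ (n-j) * B ε j)
          = ((n+1 : ℕ) : MvPolynomial (Fin 2) ℤ) *
              (((n.choose j : ℕ) : MvPolynomial (Fin 2) ℤ) * (cpt ε j ^ (n-j) * B ε j)) := by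
        intro j hj
        have hj' : j < n+1 := Finset.mem_range.mp hj
        have hnat : (n+1).choose j * (n+1-j) = (n+1) * n.choose j := by
          rw [← Nat.choose_mul_succ_eq n j, Nat.mul_comm]
        rw [hnat]
        push_cast
        ring
      rw [Finset.sum_congr rfl hc, ← Finset.mul_sum, Brec]
    have e2 : ∑ j ∈ Finset.range (n+1),
        (((n+1).choose j : ℕ) : MvPolynomial (Fin 2) ℤ) * (cpt ε j ^ (n+1-j) * D (B ε j))
        = ((n+1 : ℕ) : MvPolynomial (Fin 2) ℤ) *
            ∑ i ∈ Finset.range n,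
              ((n.choose i : ℕ) : MvPolynomial (Fin 2) ℤ) *
                (cpt (shift ε) i ^ (n-i) * B (shift ε) i) := by
      rw [Finset.sum_range_succ']
      rw [B_zero, D_one, mul_zero, mul_zero, add_zero]
      have hc : ∀ i ∈ Finset.range n,
          (((n+1).choose (i+1) : ℕ) : MvPolynomial (Fin 2) ℤ) *
              (cpt ε (i+1) ^ (n+1-(i+1)) * D (B ε (i+1)))
          = ((n+1 : ℕ) : MvPolynomial (Fin 2) ℤ) *
              (((n.choose i : ℕ) : MvPolynomial (Fin 2) ℤ) *
                (cpt (shift ε) i ^ (n-i) * B (shift ε) i)) := by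
        intro i hi
        have hi' : i < n := Finset.mem_range.mp hi
        rw [ih i hi', ← cpt_shift ε hε i]
        have he : n+1-(i+1) = n-i := by omega
        rw [he]
        have hnat : (n+1) * n.choose i = (n+1).choose (i+1) * (i+1) :=
          Nat.add_one_mul_choose_eq n i
        calc (((n+1).choose (i+1) : ℕ) : MvPolynomial (Fin 2) ℤ) *
              (cpt (shift ε) i ^ (n-i) *
                (((i+1 : ℕ) : MvPolynomial (Fin 2) ℤ) * B (shift ε) i))
            = (((n+1).choose (i+1) * (i+1) : ℕ) : MvPolynomial (Fin 2) ℤ) *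
              (cpt (shift ε) i ^ (n-i) * B (shift ε) i) := by push_cast; ring
          _ = _ := by rw [← hnat]; push_cast; ring
      rw [Finset.sum_congr rfl hc, ← Finset.mul_sum]
    rw [B_succ, D_neg, D_sum, Finset.sum_congr rfl hterm, Finset.sum_add_distrib, e2]
    rw [Finset.sum_neg_distrib, e1]
    cases n with
    | zero => simp [B_zero]
    | succ m =>
      rw [if_neg (Nat.succ_ne_zero m), B_succ]
      ring

/-- encode monomials on two variables -/
noncomputable def mk (i j : ℕ) : Fin 2 →₀ ℕ := Finsupp.single 0 i + Finsupp.single 1 j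

lemma mk_apply0 (i j : ℕ) : (mk i j) 0 = i := by
  simp [mk, Finsupp.single_apply]

lemma mk_apply1 (i j : ℕ) : (mk i j) 1 = j := by
  simp [mk, Finsupp.single_apply]

lemma eq_mk (m : Fin 2 →₀ ℕ) : m = mk (m 0) (m 1) := by
  ext x
  fin_cases x
  · exact (mk_apply0 (m 0) (m 1)).symm
  · exact (mk_apply1 (m 0) (m 1)).symm

lemma mk_add_s0 (i j : ℕ) : mk i j + Finsupp.single 0 1 = mk (i+1) j := by
  ext x
  fin_cases x
  · simp only [Finsupp.add_apply]
    rw [show ((⟨0, by omega⟩ : Fin 2)) = (0 : Fin 2) from rfl, mk_apply0, mk_apply0,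
      Finsupp.single_eq_same]
  · simp only [Finsupp.add_apply]
    rw [show ((⟨1, by omega⟩ : Fin 2)) = (1 : Fin 2) from rfl, mk_apply1, mk_apply1,
      Finsupp.single_eq_of_ne (by decide), Nat.add_zero]

lemma mk_add_s1 (i j : ℕ) : mk i j + Finsupp.single 1 1 = mk i (j+1) := by
  ext x
  fin_cases x
  · simp only [Finsupp.add_apply]
    rw [show ((⟨0, by omega⟩ : Fin 2)) = (0 : Fin 2) from rfl, mk_apply0, mk_apply0,
      Finsupp.single_eq_of_ne (by decide), Nat.add_zero]
  · simp only [Finsupp.add_apply]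
    rw [show ((⟨1, by omega⟩ : Fin 2)) = (1 : Fin 2) from rfl, mk_apply1, mk_apply1,
      Finsupp.single_eq_same]

lemma single0_eq_mk (k : ℕ) : Finsupp.single (0 : Fin 2) k = mk k 0 := by
  rw [mk, Finsupp.single_zero, add_zero]

lemma single1_eq_mk (k : ℕ) : Finsupp.single (1 : Fin 2) k = mk 0 k := by
  rw [mk, Finsupp.single_zero, zero_add]

lemma coeff_natCast_mul (c : ℕ) (p : MvPolynomial (Fin 2) ℤ) (m : Fin 2 →₀ ℕ) :
    coeff m (((c : ℕ) : MvPolynomial (Fin 2) ℤ) * p) = (c : ℤ) * coeff m p := by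
  rw [natCast_eq_C, coeff_C_mul]

lemma B_one (ε : ℕ → ℤ) : B ε 1 = - cpt ε 0 := by
  rw [B_succ]
  simp [B_zero]

lemma pos_div (c X : ℤ) (hc : 0 < c) (h : 0 < c * X) : 0 < X := by
  have h' : c * 0 < c * X := by rwa [mul_zero]
  exact lt_of_mul_lt_mul_left h' hc.le

lemma nonneg_div (c X : ℤ) (hc : 0 < c) (h : 0 ≤ c * X) : 0 ≤ X := by
  have h' : c * 0 ≤ c * X := by rwa [mul_zero]
  exact le_of_mul_le_mul_left h' hc

lemma B_pos (n : ℕ) : ∀ ε : ℕ → ℤ, ε 0 = 1 → (∀ j, ε j = 1 ∨ ε j = -1) → 1 ≤ n →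
    (∀ m, 0 ≤ ε n * coeff m (B ε n)) ∧
    (0 < ε n * coeff (Finsupp.single (if ε 1 = 1 then (0 : Fin 2) else 1) n) (B ε n)) := by
  induction n with
  | zero => intro ε h0 hsg h1; omega
  | succ n IH =>
    intro ε h0 hsg _
    have hε1 : ε 1 * ε 1 = 1 := by rcases hsg 1 with h | h <;> rw [h] <;> norm_num
    rcases Nat.eq_zero_or_pos n with rfl | hn
    · -- base case : n+1 = 1
      rw [B_one]
      rcases hsg 1 with h | h
      · have hc : cpt ε 0 = - X 0 := by
          unfold cpt; rw [if_pos (by rw [h0, h]; norm_num)]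
        rw [hc, neg_neg, h, if_pos rfl]
        constructor
        · intro m; rw [one_mul, coeff_X']; split <;> norm_num
        · rw [one_mul, coeff_X', if_pos rfl]; norm_num
      · have hc : cpt ε 0 = X 1 := by
          unfold cpt; rw [if_neg (by rw [h0, h]; norm_num)]
        rw [hc, h, if_neg (by norm_num)]
        constructor
        · intro m; rw [coeff_neg, coeff_X']; split <;> norm_num
        · rw [coeff_neg, coeff_X', if_pos rfl]; norm_num
    · -- inductive step, n ≥ 1
      have hε'0 : shift ε 0 = 1 := hε1
      have hε'sg : ∀ j, shift ε j = 1 ∨ shift ε j = -1 := by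
        intro j
        unfold shift
        rcases hsg 1 with h | h <;> rcases hsg (j+1) with h' | h' <;> rw [h, h'] <;> norm_num
      obtain ⟨IH1, IH2⟩ := IH (shift ε) hε'0 hε'sg hn
      have E : ∀ i j : ℕ, ((i:ℤ)+1) * coeff (mk (i+1) j) (B ε (n+1))
          - ((j:ℤ)+1) * coeff (mk i (j+1)) (B ε (n+1))
          = ((n:ℤ)+1) * coeff (mk i j) (B (shift ε) n) := by
        intro i j
        have h1 := congrArg (coeff (mk i j)) (B_deriv ε hε1 n)
        rw [coeff_natCast_mul] at h1
        unfold D at h1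
        rw [coeff_sub, coeff_pderiv, coeff_pderiv, mk_add_s0, mk_add_s1, mk_apply0,
          mk_apply1] at h1
        push_cast at h1
        exact h1
      have h2 : ε 1 * shift ε n = ε (n+1) := by
        unfold shift
        calc ε 1 * (ε 1 * ε (n+1)) = (ε 1 * ε 1) * ε (n+1) := by ring
        _ = ε (n+1) := by rw [hε1, one_mul]
      have R : ∀ i j : ℕ, ((i:ℤ)+1) * (ε (n+1) * coeff (mk (i+1) j) (B ε (n+1)))
          - ((j:ℤ)+1) * (ε (n+1) * coeff (mk i (j+1)) (B ε (n+1)))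
          = ((n:ℤ)+1) * (ε 1 * (shift ε n * coeff (mk i j) (B (shift ε) n))) := by
        intro i j
        calc ((i:ℤ)+1) * (ε (n+1) * coeff (mk (i+1) j) (B ε (n+1)))
            - ((j:ℤ)+1) * (ε (n+1) * coeff (mk i (j+1)) (B ε (n+1)))
            = ε (n+1) * (((i:ℤ)+1) * coeff (mk (i+1) j) (B ε (n+1))
                - ((j:ℤ)+1) * coeff (mk i (j+1)) (B ε (n+1))) := by ring
          _ = ε (n+1) * (((n:ℤ)+1) * coeff (mk i j) (B (shift ε) n)) := by rw [E i j]
          _ = ((n:ℤ)+1) * ((ε 1 * shift ε n) * coeff (mk i j) (B (shift ε) n)) := by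
              rw [h2]; ring
          _ = _ := by ring
      have hposn : (0:ℤ) < (n:ℤ)+1 := by positivity
      rcases hsg 1 with h1s | h1s
      · -- case ε 1 = 1
        have hdvd : X (0 : Fin 2) ∣ B ε (n+1) := by
          apply X_dvd_B ε 0 _ n
          unfold cpt
          rw [if_pos (by rw [h0, h1s]; norm_num)]
          exact (dvd_neg).mpr dvd_rfl
        have hbd : ∀ j : ℕ, ε (n+1) * coeff (mk 0 j) (B ε (n+1)) = 0 := by
          intro j
          rw [coeff_eq_zero_of_X_dvd hdvd (by rw [mk_apply0]), mul_zero]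
        have hR1 : ∀ i j : ℕ, ((i:ℤ)+1) * (ε (n+1) * coeff (mk (i+1) j) (B ε (n+1)))
            = ((n:ℤ)+1) * (shift ε n * coeff (mk i j) (B (shift ε) n))
              + ((j:ℤ)+1) * (ε (n+1) * coeff (mk i (j+1)) (B ε (n+1))) := by
          intro i j
          have := R i j
          rw [h1s, one_mul] at this
          linarith
        have hnn : ∀ i j : ℕ, 0 ≤ ε (n+1) * coeff (mk i j) (B ε (n+1)) := by
          intro i
          induction i with
          | zero => intro j; exact le_of_eq (hbd j).symm
          | succ i ihi =>
            intro j
            apply nonneg_div ((i:ℤ)+1) _ (by positivity)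
            rw [hR1 i j]
            have ha := IH1 (mk i j)
            have hb := ihi (j+1)
            have hc1 : (0:ℤ) ≤ (j:ℤ)+1 := by positivity
            nlinarith
        constructor
        · intro m
          rw [eq_mk m]
          exact hnn (m 0) (m 1)
        · rw [h1s, if_pos rfl, single0_eq_mk]
          by_cases h2s : shift ε 1 = 1
          · rw [h2s, if_pos rfl, single0_eq_mk] at IH2
            apply pos_div ((n:ℤ)+1) _ hposn
            rw [hR1 n 0]
            have hb := hnn n 1
            nlinarith
          · rw [if_neg h2s, single1_eq_mk] at IH2
            have chain : ∀ r, r ≤ n → 0 < ε (n+1) * coeff (mk (r+1) (n-r)) (B ε (n+1)) := by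
              intro r
              induction r with
              | zero =>
                intro _
                rw [Nat.sub_zero]
                apply pos_div (((0:ℕ):ℤ)+1) _ (by norm_num)
                rw [hR1 0 n]
                have hb := hbd (n+1)
                rw [show n + 1 = n.succ from rfl] at hb
                nlinarith [hb]
              | succ r ihr =>
                intro hrn
                have hrn' : r ≤ n := by omega
                have hstep := hR1 (r+1) (n-(r+1))
                have e1 : n - (r+1) + 1 = n - r := by omega
                rw [e1] at hstep
                apply pos_div ((r:ℤ)+1+1) _ (by positivity)
                have ha := IH1 (mk (r+1) (n-(r+1)))
                have hb := ihr hrn'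
                have hc1 : (0:ℤ) < ((n:ℤ)-(r:ℤ)-1)+1 := by
                  have : (r:ℤ) < (n:ℤ) := by exact_mod_cast hrn
                  linarith
                have e2 : ((n - (r+1) : ℕ) : ℤ) = (n:ℤ)-(r:ℤ)-1 := by
                  have : r + 1 ≤ n := hrn
                  push_cast [Nat.cast_sub this]
                  ring
                rw [e2] at hstep
                push_cast at hstep ⊢
                nlinarith
            have := chain n le_rfl
            rwa [Nat.sub_self] at this
      · -- case ε 1 = -1
        have hdvd : X (1 : Fin 2) ∣ B ε (n+1) := by
          apply X_dvd_B ε 1 _ n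
          unfold cpt
          rw [if_neg (by rw [h0, h1s]; norm_num)]
        have hbd : ∀ i : ℕ, ε (n+1) * coeff (mk i 0) (B ε (n+1)) = 0 := by
          intro i
          rw [coeff_eq_zero_of_X_dvd hdvd (by rw [mk_apply1]), mul_zero]
        have hR1 : ∀ i j : ℕ, ((j:ℤ)+1) * (ε (n+1) * coeff (mk i (j+1)) (B ε (n+1)))
            = ((n:ℤ)+1) * (shift ε n * coeff (mk i j) (B (shift ε) n))
              + ((i:ℤ)+1) * (ε (n+1) * coeff (mk (i+1) j) (B ε (n+1))) := by
          intro i j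
          have := R i j
          rw [h1s] at this
          linarith
        have hnn : ∀ j i : ℕ, 0 ≤ ε (n+1) * coeff (mk i j) (B ε (n+1)) := by
          intro j
          induction j with
          | zero => intro i; exact le_of_eq (hbd i).symm
          | succ j ihj =>
            intro i
            apply nonneg_div ((j:ℤ)+1) _ (by positivity)
            rw [hR1 i j]
            have ha := IH1 (mk i j)
            have hb := ihj (i+1)
            have hc1 : (0:ℤ) ≤ (i:ℤ)+1 := by positivity
            nlinarith
        constructor
        · intro m
          rw [eq_mk m]
          exact hnn (m 1) (m 0)
        · rw [h1s, if_neg (by norm_num), single1_eq_mk]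
          by_cases h2s : shift ε 1 = 1
          · rw [h2s, if_pos rfl, single0_eq_mk] at IH2
            have chain : ∀ r, r ≤ n → 0 < ε (n+1) * coeff (mk (n-r) (r+1)) (B ε (n+1)) := by
              intro r
              induction r with
              | zero =>
                intro _
                rw [Nat.sub_zero]
                apply pos_div (((0:ℕ):ℤ)+1) _ (by norm_num)
                rw [hR1 n 0]
                have hb := hnn 0 (n+1)
                rw [show n + 1 = n.succ from rfl] at hb
                nlinarith [hb]
              | succ r ihr =>
                intro hrn
                have hrn' : r ≤ n := by omega
                have hstep := hR1 (n-(r+1)) (r+1)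
                have e1 : n - (r+1) + 1 = n - r := by omega
                rw [e1] at hstep
                apply pos_div ((r:ℤ)+1+1) _ (by positivity)
                have ha := IH1 (mk (n-(r+1)) (r+1))
                have hb := ihr hrn'
                have hc1 : (0:ℤ) < ((n:ℤ)-(r:ℤ)-1)+1 := by
                  have : (r:ℤ) < (n:ℤ) := by exact_mod_cast hrn
                  linarith
                have e2 : ((n - (r+1) : ℕ) : ℤ) = (n:ℤ)-(r:ℤ)-1 := by
                  have : r + 1 ≤ n := hrn
                  push_cast [Nat.cast_sub this]
                  ring
                rw [e2] at hstep
                push_cast at hstep ⊢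
                nlinarith
            have := chain n le_rfl
            rwa [Nat.sub_self] at this
          · rw [if_neg h2s, single1_eq_mk] at IH2
            apply pos_div ((n:ℤ)+1) _ hposn
            rw [hR1 0 n]
            have hb := hnn n 1
            nlinarith

lemma choose_trinom (n k i : ℕ) : n.choose k * (n-k).choose i = n.choose i * (n-i).choose k := by
  by_cases h : k + i ≤ n
  · have e1 := Nat.choose_mul (n := n) (show k ≤ k + i by omega)
    have e2 := Nat.choose_mul (n := n) (show i ≤ k + i by omega)
    rw [Nat.add_sub_cancel_left] at e1
    rw [Nat.add_sub_cancel] at e2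
    rw [← e1, ← e2, Nat.choose_symm_add]
  · have z1 : n.choose k * (n-k).choose i = 0 := by
      by_cases hk : k ≤ n
      · rw [Nat.choose_eq_zero_of_lt (show n - k < i by omega), Nat.mul_zero]
      · rw [Nat.choose_eq_zero_of_lt (show n < k by omega), Nat.zero_mul]
    have z2 : n.choose i * (n-i).choose k = 0 := by
      by_cases hi : i ≤ n
      · rw [Nat.choose_eq_zero_of_lt (show n - i < k by omega), Nat.mul_zero]
      · rw [Nat.choose_eq_zero_of_lt (show n < i by omega), Nat.zero_mul]
    rw [z1, z2]

lemma key {R : Type*} [CommRing R] (γ β : ℕ → R)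
    (hβ : ∀ m : ℕ, ∑ k ∈ Finset.range (m+1), (m.choose k : R) * (γ k ^ (m-k) * β k)
          = if m = 0 then 1 else 0)
    (x : R) (n : ℕ) :
    ∑ k ∈ Finset.range (n+1), (n.choose k : R) * ((x + γ k) ^ (n-k) * β k) = x ^ n := by
  have step1 : ∀ k ∈ Finset.range (n+1),
      (n.choose k : R) * ((x + γ k) ^ (n-k) * β k)
      = ∑ i ∈ Finset.range (n+1),
          (n.choose k : R) * ((n-k).choose i : R) * x ^ i * γ k ^ (n-k-i) * β k := by
    intro k _
    rw [add_pow]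
    rw [Finset.sum_mul, Finset.mul_sum, ← Finset.sum_subset
      (Finset.range_subset_range.mpr (show n-k+1 ≤ n+1 by omega))]
    · apply Finset.sum_congr rfl
      intro i _
      ring
    · intro i _ hi
      rw [Finset.mem_range, not_lt] at hi
      rw [Nat.choose_eq_zero_of_lt (show n-k < i by omega)]
      push_cast
      ring
  rw [Finset.sum_congr rfl step1, Finset.sum_comm]
  have step2 : ∀ i ∈ Finset.range (n+1),
      (∑ k ∈ Finset.range (n+1),
        (n.choose k : R) * ((n-k).choose i : R) * x ^ i * γ k ^ (n-k-i) * β k)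
      = (n.choose i : R) * x ^ i * (if n - i = 0 then 1 else 0) := by
    intro i _
    have inner : ∀ k ∈ Finset.range (n+1),
        (n.choose k : R) * ((n-k).choose i : R) * x ^ i * γ k ^ (n-k-i) * β k
        = (n.choose i : R) * x ^ i * (((n-i).choose k : R) * (γ k ^ (n-i-k) * β k)) := by
      intro k _
      have hc : (n.choose k : R) * ((n-k).choose i : R) = (n.choose i : R) * ((n-i).choose k : R) := by
        have h := choose_trinom n k i
        have h2 := congrArg (fun t : ℕ => (t : R)) h
        push_cast at h2
        exact h2
      have he : n - k - i = n - i - k := by omega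
      rw [he]
      calc (n.choose k : R) * ((n-k).choose i : R) * x ^ i * γ k ^ (n-i-k) * β k
          = ((n.choose k : R) * ((n-k).choose i : R)) * (x ^ i * γ k ^ (n-i-k) * β k) := by ring
        _ = ((n.choose i : R) * ((n-i).choose k : R)) * (x ^ i * γ k ^ (n-i-k) * β k) := by rw [hc]
        _ = _ := by ring
    rw [Finset.sum_congr rfl inner, ← Finset.mul_sum]
    congr 1
    rw [← hβ (n-i), ← Finset.sum_subset
      (Finset.range_subset_range.mpr (show n-i+1 ≤ n+1 by omega))]
    intro k _ hk
    rw [Finset.mem_range, not_lt] at hk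
    rw [Nat.choose_eq_zero_of_lt (show n-i < k by omega)]
    push_cast
    ring
  rw [Finset.sum_congr rfl step2]
  rw [Finset.sum_eq_single n]
  · rw [Nat.sub_self, if_pos rfl, Nat.choose_self]
    push_cast
    ring
  · intro i hi hne
    rw [Finset.mem_range] at hi
    rw [if_neg (show ¬ (n - i = 0) by omega)]
    ring
  · intro h
    exact absurd (Finset.self_mem_range_succ n) h

section Eval

variable {K : Type*} [CommRing K]

lemma aeval_cpt (ε : ℕ → ℤ) (a b x : K) (k : ℕ) :
    aeval ![x - a, b - x] (cpt ε k) = (if ε k * ε (k+1) = 1 then a else b) - x := by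
  unfold cpt
  split
  · rw [map_neg, aeval_X]
    simp
  · rw [aeval_X]
    simp

lemma hbeta (ε : ℕ → ℤ) (a b x : K) (m : ℕ) :
    ∑ k ∈ Finset.range (m+1), (m.choose k : K) *
      ((((if ε k * ε (k+1) = 1 then a else b) - x)) ^ (m-k) * aeval ![x-a,b-x] (B ε k))
    = if m = 0 then 1 else 0 := by
  have h := congrArg (aeval ![x-a,b-x]) (Brec ε m)
  rw [map_sum, apply_ite (aeval ![x-a,b-x]), map_one, map_zero] at h
  rw [← h]
  apply Finset.sum_congr rfl
  intro k _
  rw [map_mul, map_mul, map_pow, map_natCast, aeval_cpt]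

lemma mono_id (ε : ℕ → ℤ) (d : ℕ) (hd : 1 ≤ d) (a b x : K) (n : ℕ) (hn : n ≤ d) :
    x ^ n = (if ε 0 * ε 1 = 1 then a else b) ^ n
      + (∑ k ∈ Finset.Ico 1 d, aeval ![x-a,b-x] (B ε k) *
          ((n.choose k : K) * (if ε k * ε (k+1) = 1 then a else b) ^ (n-k)))
      + (if n = d then aeval ![x-a,b-x] (B ε d) else 0) := by
  have hkey := key (fun k => (if ε k * ε (k+1) = 1 then a else b) - x)
    (fun k => aeval ![x-a,b-x] (B ε k)) (hbeta ε a b x) x n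
  have hsimp : ∀ k ∈ Finset.range (n+1),
      (n.choose k : K) * ((x + ((if ε k * ε (k+1) = 1 then a else b) - x)) ^ (n-k) *
        aeval ![x-a,b-x] (B ε k))
      = aeval ![x-a,b-x] (B ε k) *
          ((n.choose k : K) * (if ε k * ε (k+1) = 1 then a else b) ^ (n-k)) := by
    intro k _
    rw [show x + ((if ε k * ε (k+1) = 1 then a else b) - x)
        = (if ε k * ε (k+1) = 1 then a else b) by ring]
    ring
  rw [Finset.sum_congr rfl hsimp] at hkey
  rw [← hkey]
  have h0 : aeval ![x-a,b-x] (B ε 0) * ((n.choose 0 : K) *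
      (if ε 0 * ε 1 = 1 then a else b) ^ (n-0)) = (if ε 0 * ε 1 = 1 then a else b) ^ n := by
    rw [B_zero, map_one, Nat.choose_zero_right, Nat.sub_zero]
    push_cast
    ring
  have hsplit : ∑ k ∈ Finset.range (n+1), aeval ![x-a,b-x] (B ε k) *
        ((n.choose k : K) * (if ε k * ε (k+1) = 1 then a else b) ^ (n-k))
      = (if ε 0 * ε 1 = 1 then a else b) ^ n
        + ∑ k ∈ Finset.Ico 1 (n+1), aeval ![x-a,b-x] (B ε k) *
            ((n.choose k : K) * (if ε k * ε (k+1) = 1 then a else b) ^ (n-k)) := by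
    rw [Finset.range_eq_Ico, Finset.sum_eq_sum_Ico_succ_bot (by omega : 0 < n+1), h0]
  rw [hsplit]
  rcases Nat.lt_or_ge n d with hlt | hge
  · rw [if_neg (show ¬ (n = d) by omega), add_zero]
    congr 1
    apply Finset.sum_subset
    · apply Finset.Ico_subset_Ico le_rfl
      omega
    · intro k hk hk2
      rw [Finset.mem_Ico] at hk hk2
      rw [Nat.choose_eq_zero_of_lt (show n < k by omega)]
      push_cast
      ring
  · have hnd : n = d := by omega
    subst hnd
    rw [if_pos rfl, Finset.sum_Ico_succ_top (show (1:ℕ) ≤ n by omega)]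
    rw [Nat.choose_self, Nat.sub_self]
    push_cast
    ring

lemma main_eval (ε : ℕ → ℤ) (d : ℕ) (hd : 1 ≤ d) (P : Polynomial K) (hP : P.natDegree ≤ d)
    (a b x : K) :
    P.eval x = P.eval (if ε 0 * ε 1 = 1 then a else b)
      + (∑ k ∈ Finset.Ico 1 d, aeval ![x-a,b-x] (B ε k) *
          (Polynomial.hasseDeriv k P).eval (if ε k * ε (k+1) = 1 then a else b))
      + aeval ![x-a,b-x] (B ε d) * P.coeff d := by
  have hPd : P = ∑ n ∈ Finset.range (d+1), Polynomial.monomial n (P.coeff n) :=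
    Polynomial.as_sum_range' P (d+1) (by omega)
  have hhd : ∀ (k : ℕ) (y : K), (Polynomial.hasseDeriv k P).eval y
      = ∑ n ∈ Finset.range (d+1), P.coeff n * ((n.choose k : K) * y ^ (n-k)) := by
    intro k y
    conv_lhs => rw [hPd]
    rw [map_sum, Polynomial.eval_finset_sum]
    apply Finset.sum_congr rfl
    intro n _
    rw [Polynomial.hasseDeriv_monomial, Polynomial.eval_monomial]
    ring
  have heval : ∀ y : K, P.eval y = ∑ n ∈ Finset.range (d+1), P.coeff n * y ^ n :=
    fun y => Polynomial.eval_eq_sum_range' (by omega) y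
  rw [heval x, heval (if ε 0 * ε 1 = 1 then a else b)]
  have hsum2 : ∑ k ∈ Finset.Ico 1 d, aeval ![x-a,b-x] (B ε k) *
        (Polynomial.hasseDeriv k P).eval (if ε k * ε (k+1) = 1 then a else b)
      = ∑ n ∈ Finset.range (d+1), ∑ k ∈ Finset.Ico 1 d, P.coeff n *
          (aeval ![x-a,b-x] (B ε k) *
            ((n.choose k : K) * (if ε k * ε (k+1) = 1 then a else b) ^ (n-k))) := by
    rw [Finset.sum_comm]
    apply Finset.sum_congr rfl
    intro k _
    rw [hhd k, Finset.mul_sum]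
    apply Finset.sum_congr rfl
    intro n _
    ring
  rw [hsum2]
  have hlast : aeval ![x-a,b-x] (B ε d) * P.coeff d
      = ∑ n ∈ Finset.range (d+1), P.coeff n *
          (if n = d then aeval ![x-a,b-x] (B ε d) else 0) := by
    rw [Finset.sum_congr rfl (fun n _ => by rw [mul_ite, mul_zero, mul_comm])]
    rw [Finset.sum_ite_eq' (Finset.range (d+1)) d
      (fun n => aeval ![x-a,b-x] (B ε d) * P.coeff n)]
    rw [if_pos (Finset.self_mem_range_succ d)]
  rw [hlast, ← Finset.sum_add_distrib, ← Finset.sum_add_distrib]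
  apply Finset.sum_congr rfl
  intro n hn
  rw [Finset.mem_range] at hn
  have hmono := mono_id ε d hd a b x n (by omega)
  calc P.coeff n * x ^ n
      = P.coeff n * ((if ε 0 * ε 1 = 1 then a else b) ^ n
        + (∑ k ∈ Finset.Ico 1 d, aeval ![x-a,b-x] (B ε k) *
            ((n.choose k : K) * (if ε k * ε (k+1) = 1 then a else b) ^ (n-k)))
        + (if n = d then aeval ![x-a,b-x] (B ε d) else 0)) := by rw [← hmono]
    _ = _ := by
        rw [mul_add, mul_add, Finset.mul_sum]

end Eval

end GTaylor

/-- **Existence of Generalized Taylor Formulae.**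
Given `d ≥ 1` and a sign sequence `ε : {1,…,d} → {−1,+1}` (with `ε 0 = 1`), there is a family
of polynomials `H k ∈ ℤ[e₁,e₂]` (`k = 1,…,d`), homogeneous of degree `k` with nonnegative
coefficients, such that for every commutative ring `K`, every `P ∈ K[X]` of degree `≤ d`, and
all `a, b, x ∈ K`, with `e₁ = x − a`, `e₂ = b − x`, one has
`P(x) = P(a₀) + ∑_{k=1}^{d−1} ε k • H k (e₁,e₂) • P^[k](a_k) + ε d • H d (e₁,e₂) • p_d`,
where `P^[k]` is the `k`-th Hasse derivative, `p_d` is the coefficient of `X^d`, and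
`a_k = a` if `ε k * ε (k+1) = 1`, `a_k = b` otherwise.  Moreover the stated divisibility and
nonvanishing properties of the `H k` hold according to the sign of `ε 1`. -/
theorem generalized_taylor_formula_exists
    (d : ℕ) (hd : 1 ≤ d) (ε : ℕ → ℤ) (hε0 : ε 0 = 1)
    (hε : ∀ k, 1 ≤ k → k ≤ d → ε k = 1 ∨ ε k = -1) :
    ∃ H : ℕ → MvPolynomial (Fin 2) ℤ,
      (∀ k, 1 ≤ k → k ≤ d → MvPolynomial.IsHomogeneous (H k) k) ∧
      (∀ k, 1 ≤ k → k ≤ d → ∀ m : Fin 2 →₀ ℕ, 0 ≤ MvPolynomial.coeff m (H k)) ∧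
      (∀ (K : Type u) [inst : CommRing K], ∀ P : Polynomial K, P.natDegree ≤ d →
        ∀ a b x : K,
          P.eval x =
            P.eval (if ε 0 * ε 1 = 1 then a else b)
            + (∑ k ∈ Finset.Ico 1 d,
                (ε k : K) * (MvPolynomial.aeval ![x - a, b - x] (H k)) *
                  (Polynomial.hasseDeriv k P).eval (if ε k * ε (k+1) = 1 then a else b))
            + (ε d : K) * (MvPolynomial.aeval ![x - a, b - x] (H d)) * P.coeff d) ∧
      (ε 1 = 1 → ∀ k, 1 ≤ k → k ≤ d →
        MvPolynomial.X 0 ∣ H k ∧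
          MvPolynomial.coeff (Finsupp.single (0 : Fin 2) k) (H k) ≠ 0) ∧
      (ε 1 = -1 → ∀ k, 1 ≤ k → k ≤ d →
        MvPolynomial.X 1 ∣ H k ∧
          MvPolynomial.coeff (Finsupp.single (1 : Fin 2) k) (H k) ≠ 0) := by
  classical
  open MvPolynomial in
  set E : ℕ → ℤ := fun j => if j ≤ d then ε j else 1 with hEdef
  have hagree : ∀ j, j ≤ d → E j = ε j := by
    intro j hj
    simp only [hEdef, if_pos hj]
  have h0 : E 0 = 1 := by rw [hagree 0 (by omega), hε0]
  have hsg : ∀ j, E j = 1 ∨ E j = -1 := by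
    intro j
    by_cases hj : j ≤ d
    · rw [hagree j hj]
      rcases Nat.eq_zero_or_pos j with rfl | hjp
      · left; exact hε0
      · exact hε j hjp hj
    · exact Or.inl (by simp only [hEdef]; exact if_neg hj)
  refine ⟨fun k => E k • GTaylor.B E k, ?_, ?_, ?_, ?_, ?_⟩
  · -- homogeneity
    intro k _ _
    beta_reduce
    rw [MvPolynomial.smul_eq_C_mul]
    exact (GTaylor.B_hom E k).C_mul _
  · -- nonneg coefficients
    intro k h1 _ m
    beta_reduce
    rw [MvPolynomial.coeff_smul, smul_eq_mul]
    exact ((GTaylor.B_pos k E h0 hsg h1).1 m)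
  · -- evaluation identity
    intro K _ P hP a b x
    beta_reduce
    have hme := GTaylor.main_eval E d hd P hP a b x
    have hconv : ∀ k, 1 ≤ k → k ≤ d → ∀ Z : K,
        (ε k : K) * (MvPolynomial.aeval ![x-a,b-x] (E k • GTaylor.B E k)) * Z
        = MvPolynomial.aeval ![x-a,b-x] (GTaylor.B E k) * Z := by
      intro k hk1 hk2 Z
      rw [MvPolynomial.smul_eq_C_mul, map_mul, MvPolynomial.aeval_C]
      have hcast : (algebraMap ℤ K) (E k) = ((ε k : ℤ) : K) := by
        rw [hagree k hk2]
        simp [algebraMap_int_eq]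
      rw [hcast]
      have h11 : (ε k : K) * (ε k : K) = 1 := by
        rcases hε k hk1 hk2 with h | h <;> rw [h] <;> norm_num
      calc (ε k:K) * (((ε k : ℤ):K) * MvPolynomial.aeval ![x-a,b-x] (GTaylor.B E k)) * Z
          = ((ε k:K)*(ε k:K)) * (MvPolynomial.aeval ![x-a,b-x] (GTaylor.B E k) * Z) := by
            push_cast
            ring
        _ = _ := by rw [h11, one_mul]
    have hA : P.eval (if E 0 * E 1 = 1 then a else b)
        = P.eval (if ε 0 * ε 1 = 1 then a else b) := by
      rw [hagree 0 (by omega), hagree 1 hd]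
    have hS : (∑ k ∈ Finset.Ico 1 d, MvPolynomial.aeval ![x-a,b-x] (GTaylor.B E k) *
          (Polynomial.hasseDeriv k P).eval (if E k * E (k+1) = 1 then a else b))
        = ∑ k ∈ Finset.Ico 1 d,
            (ε k : K) * (MvPolynomial.aeval ![x - a, b - x] (E k • GTaylor.B E k)) *
              (Polynomial.hasseDeriv k P).eval (if ε k * ε (k+1) = 1 then a else b) := by
      apply Finset.sum_congr rfl
      intro k hk
      rw [Finset.mem_Ico] at hk
      rw [show (if E k * E (k+1) = 1 then a else b) = (if ε k * ε (k+1) = 1 then a else b) by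
        rw [hagree k (by omega), hagree (k+1) (by omega)]]
      exact (hconv k hk.1 (by omega) _).symm
    have hT : MvPolynomial.aeval ![x-a,b-x] (GTaylor.B E d) * P.coeff d
        = (ε d : K) * (MvPolynomial.aeval ![x - a, b - x] (E d • GTaylor.B E d)) *
            P.coeff d := (hconv d hd le_rfl _).symm
    rw [hme, hA, hS, hT]
  · -- case ε 1 = 1
    intro he1 k h1 h2
    beta_reduce
    have hE1 : E 1 = 1 := by rw [hagree 1 hd]; exact he1
    have hcpt : MvPolynomial.X (0 : Fin 2) ∣ GTaylor.cpt E 0 := by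
      unfold GTaylor.cpt
      rw [if_pos (by rw [h0, hE1]; norm_num)]
      exact (dvd_neg).mpr dvd_rfl
    constructor
    · rw [MvPolynomial.smul_eq_C_mul]
      apply Dvd.dvd.mul_left
      obtain ⟨m, rfl⟩ := Nat.exists_eq_succ_of_ne_zero (show k ≠ 0 by omega)
      exact GTaylor.X_dvd_B E 0 hcpt m
    · have hpos := (GTaylor.B_pos k E h0 hsg h1).2
      rw [hE1, if_pos rfl] at hpos
      rw [MvPolynomial.coeff_smul, smul_eq_mul]
      exact hpos.ne'
  · -- case ε 1 = -1
    intro he1 k h1 h2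
    beta_reduce
    have hE1 : E 1 = -1 := by rw [hagree 1 hd]; exact he1
    have hcpt : MvPolynomial.X (1 : Fin 2) ∣ GTaylor.cpt E 0 := by
      unfold GTaylor.cpt
      rw [if_neg (by rw [h0, hE1]; norm_num)]
    constructor
    · rw [MvPolynomial.smul_eq_C_mul]
      apply Dvd.dvd.mul_left
      obtain ⟨m, rfl⟩ := Nat.exists_eq_succ_of_ne_zero (show k ≠ 0 by omega)
      exact GTaylor.X_dvd_B E 1 hcpt m
    · have hpos := (GTaylor.B_pos k E h0 hsg h1).2
      rw [hE1, if_neg (by norm_num)] at hpos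
      rw [MvPolynomial.coeff_smul, smul_eq_mul]
      exact hpos.ne'
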